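/- arXiv:0902.1328 — 2 statements merged into one kernel-verified Lean document; each statement's English description precedes it below -/
import Mathlib

section
/- Let μ be a probability measure on ℝ with finite first moment and q̄ its tail quantile function (left-continuous inverse of x ↦ μ([x,∞))). Then for every λ ∈ (0,1), AVaR_μ(λ) := (1/λ)∫_0^λ q̄(u) du equals (1/λ)·C_μ(q̄(λ)) + q̄(λ), where C_μ(K) = ∫ (s−K)⁺ μ(ds). -/
open MeasureTheory Set Filter Topology ENNReal

/-- Tail function `μ([x,∞))`. -/
noncomputable def tailFn (μ : Measure ℝ) (x : ℝ) : ℝ := (μ (Ici x)).toReal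

/-- Tail quantile function: left-continuous inverse of the tail function. -/
noncomputable def tailQ (μ : Measure ℝ) (l : ℝ) : ℝ := sInf {x : ℝ | tailFn μ x < l}

/-- Call function `C_μ(K) = ∫ (s-K)⁺ μ(ds)`. -/
noncomputable def callFn (μ : Measure ℝ) (K : ℝ) : ℝ := ∫ s, max (s - K) 0 ∂μ

/-- Average Value at Risk at level `l`. -/
noncomputable def avar (μ : Measure ℝ) (l : ℝ) : ℝ := (1 / l) * ∫ u in (0 : ℝ)..l, tailQ μ u

/-- Hardy–Littlewood transform of `μ`: the law of `AVaR_μ(ξ)` for `ξ` uniform on `[0,1]`. -/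
noncomputable def hlTransform (μ : Measure ℝ) : Measure ℝ :=
  Measure.map (avar μ) (volume.restrict (Ioc (0 : ℝ) 1))

lemma tailFn_anti (μ : Measure ℝ) [IsProbabilityMeasure μ] : Antitone (tailFn μ) := by
  intro x y h
  exact ENNReal.toReal_mono (measure_ne_top μ _) (measure_mono (Ici_subset_Ici.2 h))

lemma tailSet_nonempty (μ : Measure ℝ) [IsProbabilityMeasure μ] {u : ℝ} (hu : 0 < u) :
    {x : ℝ | tailFn μ x < u}.Nonempty := by
  have h0 : Tendsto (fun x : ℝ => μ (Ici x)) atTop (𝓝 (μ (⋂ x : ℝ, Ici x))) :=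
    tendsto_measure_iInter_atTop (fun i => (measurableSet_Ici).nullMeasurableSet)
      (fun _ _ h => Ici_subset_Ici.2 h) ⟨0, measure_ne_top μ _⟩
  have hempty : (⋂ x : ℝ, Ici x) = (∅ : Set ℝ) := by
    ext y; simp only [mem_iInter, mem_Ici, mem_empty_iff_false, iff_false, not_forall]
    exact ⟨y + 1, by push_neg; linarith⟩
  rw [hempty, measure_empty] at h0
  have hpos : (0:ℝ≥0∞) < ENNReal.ofReal u := ENNReal.ofReal_pos.2 hu
  rcases (h0.eventually_lt_const hpos).exists with ⟨x, hx⟩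
  exact ⟨x, ENNReal.toReal_lt_of_lt_ofReal hx⟩

lemma tailSet_bddBelow (μ : Measure ℝ) [IsProbabilityMeasure μ] {u : ℝ} (hu : u < 1) :
    BddBelow {x : ℝ | tailFn μ x < u} := by
  rcases le_or_gt u 0 with h | h
  · have : {x : ℝ | tailFn μ x < u} = ∅ := by
      ext x; simp only [mem_setOf_eq, mem_empty_iff_false, iff_false, not_lt]
      exact h.trans ENNReal.toReal_nonneg
    rw [this]; exact bddBelow_empty
  · have h1 : Tendsto (fun x : ℝ => μ (Ici x)) atBot (𝓝 (μ univ)) :=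
      tendsto_measure_Ici_atBot μ
    rw [measure_univ] at h1
    have := h1.eventually_const_lt (ENNReal.ofReal_lt_one.2 hu)
    rcases eventually_atBot.1 this with ⟨x0, hx0⟩
    refine ⟨x0, fun y hy => ?_⟩
    by_contra hxy
    push_neg at hxy
    have := hx0 y hxy.le
    have : u < tailFn μ y :=
      (ENNReal.ofReal_lt_iff_lt_toReal h.le (measure_ne_top μ _)).1 this
    exact absurd hy (by simp only [mem_setOf_eq]; linarith)

lemma tailFn_left_cont (μ : Measure ℝ) [IsProbabilityMeasure μ] {x u : ℝ}
    (h : tailFn μ x < u) : ∃ x' < x, tailFn μ x' < u := by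
  have h0 : Tendsto (fun n : ℕ => μ (Ici (x - 1 / (n + 1)))) atTop
      (𝓝 (μ (⋂ n : ℕ, Ici (x - 1 / (n + 1))))) :=
    tendsto_measure_iInter_atTop (fun i => measurableSet_Ici.nullMeasurableSet)
      (fun n m hnm => Ici_subset_Ici.2 (by
        have hc : (n : ℝ) ≤ m := Nat.cast_le.2 hnm
        have : (1 : ℝ) / (m + 1) ≤ 1 / (n + 1) := by
          apply one_div_le_one_div_of_le
          · positivity
          · linarith
        linarith)) ⟨0, measure_ne_top μ _⟩
  have hiInter : (⋂ n : ℕ, Ici (x - 1 / (n + 1))) = Ici x := by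
    ext y
    simp only [mem_iInter, mem_Ici]
    constructor
    · intro hy
      by_contra hxy
      push_neg at hxy
      rcases exists_nat_one_div_lt (by linarith : (0:ℝ) < x - y) with ⟨n, hn⟩
      have := hy n
      linarith
    · intro hy n
      have : (0:ℝ) < 1 / (n+1) := by positivity
      linarith
  rw [hiInter] at h0
  have hlt : μ (Ici x) < ENNReal.ofReal u :=
    (ENNReal.lt_ofReal_iff_toReal_lt (measure_ne_top μ _)).2 h
  rcases (h0.eventually_lt_const hlt).exists with ⟨n, hn⟩
  have hp : (0:ℝ) < 1 / ((n:ℝ) + 1) := by positivity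
  exact ⟨x - 1 / (n + 1), by linarith, ENNReal.toReal_lt_of_lt_ofReal hn⟩

lemma tailQ_galois (μ : Measure ℝ) [IsProbabilityMeasure μ] {u x : ℝ}
    (hu0 : 0 < u) (hu1 : u < 1) : x ≤ tailQ μ u ↔ u ≤ tailFn μ x := by
  constructor
  · intro h
    by_contra hc
    push_neg at hc
    rcases tailFn_left_cont μ hc with ⟨x', hx', hx'u⟩
    have : tailQ μ u ≤ x' := csInf_le (tailSet_bddBelow μ hu1) hx'u
    linarith
  · intro h
    refine le_csInf (tailSet_nonempty μ hu0) fun y hy => ?_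
    by_contra hxy
    push_neg at hxy
    have := tailFn_anti μ hxy.le
    simp only [mem_setOf_eq] at hy
    linarith

lemma tailQ_antitoneOn (μ : Measure ℝ) [IsProbabilityMeasure μ] :
    AntitoneOn (tailQ μ) (Ioo 0 1) := by
  intro u hu v hv huv
  exact csInf_le_csInf (tailSet_bddBelow μ hv.2) (tailSet_nonempty μ hu.1)
    (fun x hx => lt_of_lt_of_le hx huv)

theorem stmt_4 (μ : Measure ℝ) [IsProbabilityMeasure μ] (hμ : Integrable id μ) :
    ∀ l ∈ Ioo (0 : ℝ) 1,
      avar μ l = (1 / l) * callFn μ (tailQ μ l) + tailQ μ l := by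
  rintro l ⟨hl0, hl1⟩
  set q := tailQ μ l with hq
  have hlq : l ≤ tailFn μ q := (tailQ_galois μ hl0 hl1).1 le_rfl
  -- integrability of the call payoff
  have hf_int : Integrable (fun s => max (s - q) 0) μ := (hμ.sub (integrable_const q)).pos_part
  have hf_nn : 0 ≤ᵐ[μ] fun s : ℝ => max (s - q) 0 := ae_of_all _ fun s => le_max_right _ _
  have hf_meas : AEMeasurable (fun s : ℝ => max (s - q) 0) μ :=
    ((measurable_id.sub_const q).max measurable_const).aemeasurable
  have hg_meas : AEMeasurable (fun u => max (tailQ μ u - q) 0) (volume.restrict (Ioo (0:ℝ) 1)) :=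
    (((aemeasurable_restrict_of_antitoneOn measurableSet_Ioo (tailQ_antitoneOn μ)).sub
      aemeasurable_const).max aemeasurable_const)
  -- layer cake on both sides
  have LHS := lintegral_eq_lintegral_meas_le (volume.restrict (Ioo (0:ℝ) 1))
    (ae_of_all _ fun u : ℝ => le_max_right (tailQ μ u - q) 0) hg_meas
  have RHS := lintegral_eq_lintegral_meas_le μ hf_nn hf_meas
  -- slice measures agree
  have hslice : ∀ t ∈ Ioi (0:ℝ),
      (volume.restrict (Ioo (0:ℝ) 1)) {u | t ≤ max (tailQ μ u - q) 0}
        = μ {s | t ≤ max (s - q) 0} := by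
    intro t ht
    rw [mem_Ioi] at ht
    have hset2 : {s : ℝ | t ≤ max (s - q) 0} = Ici (q + t) := by
      ext s
      simp only [mem_setOf_eq, mem_Ici, le_max_iff]
      constructor
      · rintro (h | h) <;> linarith
      · intro h; left; linarith
    set c := tailFn μ (q + t) with hc
    have hc0 : 0 ≤ c := ENNReal.toReal_nonneg
    have hc1 : c ≤ 1 := by
      have h1 : μ (Ici (q + t)) ≤ 1 := prob_le_one
      have := ENNReal.toReal_mono ENNReal.one_ne_top h1
      have h2 : (μ (Ici (q + t))).toReal ≤ 1 := by simpa using this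
      exact h2
    have hset1 : {u : ℝ | t ≤ max (tailQ μ u - q) 0} ∩ Ioo 0 1 = Iic c ∩ Ioo 0 1 := by
      ext u
      simp only [mem_inter_iff, mem_setOf_eq, mem_Iic, and_congr_left_iff]
      intro hu
      rw [le_max_iff]
      have : t ≤ tailQ μ u - q ↔ q + t ≤ tailQ μ u := by constructor <;> intro <;> linarith
      rw [this, tailQ_galois μ hu.1 hu.2, ← hc]
      constructor
      · rintro (h | h)
        · exact h
        · linarith
      · intro h; left; exact h
    rw [Measure.restrict_apply' measurableSet_Ioo, hset1, hset2]
    have hvol : volume (Iic c ∩ Ioo (0:ℝ) 1) = ENNReal.ofReal c := by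
      rcases lt_or_eq_of_le hc1 with h | h
      · have : Iic c ∩ Ioo (0:ℝ) 1 = Ioc 0 c := by
          ext u
          simp only [mem_inter_iff, mem_Iic, mem_Ioo, mem_Ioc]
          constructor
          · rintro ⟨h1, h2, h3⟩; exact ⟨h2, h1⟩
          · rintro ⟨h1, h2⟩; exact ⟨h2, h1, by linarith⟩
        rw [this, Real.volume_Ioc, sub_zero]
      · have : Iic c ∩ Ioo (0:ℝ) 1 = Ioo 0 1 := by
          ext u
          simp only [mem_inter_iff, mem_Iic, mem_Ioo]
          constructor
          · rintro ⟨h1, h2⟩; exact h2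
          · intro h2; exact ⟨by linarith [h2.2], h2⟩
        rw [this, Real.volume_Ioo, sub_zero, ← h]
    rw [hvol, hc]
    exact ENNReal.ofReal_toReal (measure_ne_top μ _)
  -- the key identity
  have key : ∫⁻ u in Ioo (0:ℝ) 1, ENNReal.ofReal (max (tailQ μ u - q) 0)
      = ENNReal.ofReal (callFn μ q) := by
    rw [LHS, setLIntegral_congr_fun measurableSet_Ioi hslice, ← RHS,
      ← ofReal_integral_eq_lintegral_ofReal hf_int hf_nn]
    rfl
  -- split the domain
  have hsplit : ∫⁻ u in Ioo (0:ℝ) 1, ENNReal.ofReal (max (tailQ μ u - q) 0)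
      = (∫⁻ u in Ioc (0:ℝ) l, ENNReal.ofReal (max (tailQ μ u - q) 0))
        + ∫⁻ u in Ioo l 1, ENNReal.ofReal (max (tailQ μ u - q) 0) := by
    rw [← Ioc_union_Ioo_eq_Ioo hl0.le hl1]
    exact lintegral_union measurableSet_Ioo
      (Set.disjoint_left.2 fun u h1 h2 => absurd h1.2 (not_le.2 h2.1))
  have hzero : ∫⁻ u in Ioo l 1, ENNReal.ofReal (max (tailQ μ u - q) 0) = 0 := by
    rw [setLIntegral_congr_fun (g := fun _ => 0) measurableSet_Ioo
      (fun u hu => ?_), lintegral_zero]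
    have h1 : tailQ μ u ≤ q :=
      tailQ_antitoneOn μ ⟨hl0, hl1⟩ ⟨hl0.trans hu.1, hu.2⟩ hu.1.le
    rw [max_eq_right (by linarith), ENNReal.ofReal_zero]
  have keyl : ∫⁻ u in Ioc (0:ℝ) l, ENNReal.ofReal (max (tailQ μ u - q) 0)
      = ENNReal.ofReal (callFn μ q) := by
    rw [← key, hsplit, hzero, add_zero]
  -- on (0, l], tailQ u ≥ q
  have hge : ∀ u ∈ Ioc (0:ℝ) l, q ≤ tailQ μ u := fun u hu =>
    (tailQ_galois μ hu.1 (lt_of_le_of_lt hu.2 hl1)).2 (hu.2.trans hlq)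
  have keyl2 : ∫⁻ u in Ioc (0:ℝ) l, ENNReal.ofReal (tailQ μ u - q)
      = ENNReal.ofReal (callFn μ q) := by
    rw [← keyl]
    refine setLIntegral_congr_fun measurableSet_Ioc (fun u hu => ?_)
    rw [max_eq_left (by linarith [hge u hu])]
  -- integrability of tailQ - q on (0, l]
  have hsub : Ioc (0:ℝ) l ⊆ Ioo (0:ℝ) 1 := fun u hu => ⟨hu.1, lt_of_le_of_lt hu.2 hl1⟩
  have hh_meas : AEMeasurable (fun u => tailQ μ u - q) (volume.restrict (Ioc (0:ℝ) l)) :=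
    (aemeasurable_restrict_of_antitoneOn measurableSet_Ioc
      ((tailQ_antitoneOn μ).mono hsub)).sub aemeasurable_const
  have hh_nn : 0 ≤ᵐ[volume.restrict (Ioc (0:ℝ) l)] fun u => tailQ μ u - q :=
    (ae_restrict_iff' measurableSet_Ioc).2 (ae_of_all _ fun u hu => by simp only [Pi.zero_apply]; linarith [hge u hu])
  have hh_int : Integrable (fun u => tailQ μ u - q) (volume.restrict (Ioc (0:ℝ) l)) := by
    refine ⟨hh_meas.aestronglyMeasurable, ?_⟩
    rw [hasFiniteIntegral_iff_ofReal hh_nn, keyl2]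
    exact ENNReal.ofReal_lt_top
  have hcall_nn : 0 ≤ callFn μ q := integral_nonneg fun s => le_max_right _ _
  have hInt : ∫ u in Ioc (0:ℝ) l, (tailQ μ u - q) = callFn μ q := by
    rw [integral_eq_lintegral_of_nonneg_ae hh_nn hh_meas.aestronglyMeasurable, keyl2,
      ENNReal.toReal_ofReal hcall_nn]
  -- integral of tailQ
  have htQ_int : ∫ u in Ioc (0:ℝ) l, tailQ μ u = callFn μ q + l * q := by
    have := integral_add hh_int (integrable_const q)
    simp only [sub_add_cancel] at this
    rw [this, hInt, integral_const, measureReal_def, Measure.restrict_apply_univ, Real.volume_Ioc, sub_zero,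
      ENNReal.toReal_ofReal hl0.le, smul_eq_mul]
  have havar : avar μ l = (1 / l) * (callFn μ q + l * q) := by
    rw [avar, intervalIntegral.integral_of_le hl0.le, htQ_int]
  rw [havar]
  field_simp
end

section
/- Let μ, ρ be probability measures on ℝ with finite first moments. Then AVaR_μ(λ) ≤ AVaR_ρ(λ) for all λ ∈ (0,1) if and only if C_μ(K) ≤ C_ρ(K) for all K ∈ ℝ. Consequently, ρ^HL dominates μ^HL stochastically if and only if ρ dominates μ in the increasing convex order. -/
open MeasureTheory Set Filter Topology

set_option linter.unusedSectionVars false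

section Tail
variable (ν : Measure ℝ) [IsProbabilityMeasure ν]

lemma tailFn_nonneg (x : ℝ) : 0 ≤ tailFn ν x := ENNReal.toReal_nonneg

lemma tailFn_le_one (x : ℝ) : tailFn ν x ≤ 1 := by
  have h := measure_mono (subset_univ (Ici x)) (μ := ν)
  rw [measure_univ] at h
  simpa [tailFn] using ENNReal.toReal_le_of_le_ofReal one_pos.le (by simpa using h)

lemma tailFn_antitone : Antitone (tailFn ν) := by
  intro x y hxy
  exact ENNReal.toReal_le_toReal (measure_ne_top _ _) (measure_ne_top _ _) |>.2
    (measure_mono (Ici_subset_Ici.2 hxy))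

lemma ofReal_tailFn (x : ℝ) : ENNReal.ofReal (tailFn ν x) = ν (Ici x) :=
  ENNReal.ofReal_toReal (measure_ne_top _ _)

lemma exists_tailFn_lt {u : ℝ} (hu : 0 < u) : ∃ y : ℝ, tailFn ν y < u := by
  have h : Tendsto (fun n : ℕ => ν (Ici (n : ℝ))) atTop (𝓝 (ν (⋂ n : ℕ, Ici (n : ℝ)))) := by
    apply tendsto_measure_iInter_atTop
    · exact fun n => (measurableSet_Ici).nullMeasurableSet
    · intro m n hmn
      exact Ici_subset_Ici.2 (by exact_mod_cast hmn)
    · exact ⟨0, measure_ne_top _ _⟩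
  have hinter : (⋂ n : ℕ, Ici ((n : ℝ))) = ∅ := by
    ext y
    simp only [mem_iInter, mem_Ici, mem_empty_iff_false, iff_false, not_forall, not_le]
    obtain ⟨n, hn⟩ := exists_nat_gt y
    exact ⟨n, hn⟩
  rw [hinter, measure_empty] at h
  have := (ENNReal.tendsto_atTop_zero.1 h) (ENNReal.ofReal u / 2)
    (by simp [ENNReal.div_pos_iff, ENNReal.ofReal_pos.2 hu, hu])
  obtain ⟨N, hN⟩ := this
  refine ⟨N, ?_⟩
  have hlt : ν (Ici (N : ℝ)) < ENNReal.ofReal u := by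
    calc ν (Ici (N : ℝ)) ≤ ENNReal.ofReal u / 2 := hN N le_rfl
    _ < ENNReal.ofReal u := by
        apply ENNReal.half_lt_self (by simpa using hu) (by simp)
  have := ENNReal.toReal_lt_toReal (measure_ne_top _ _) (by simp) |>.2 hlt
  rwa [ENNReal.toReal_ofReal hu.le] at this

lemma exists_lt_tailFn {u : ℝ} (hu : u < 1) : ∃ y : ℝ, u < tailFn ν y := by
  have h : Tendsto (fun n : ℕ => ν (Ici (-(n : ℝ)))) atTop (𝓝 (ν (⋃ n : ℕ, Ici (-(n : ℝ))))) := by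
    apply tendsto_measure_iUnion_atTop
    intro m n hmn
    exact Ici_subset_Ici.2 (by simp; exact_mod_cast hmn)
  have hunion : (⋃ n : ℕ, Ici (-(n : ℝ))) = univ := by
    ext y
    simp only [mem_iUnion, mem_Ici, mem_univ, iff_true]
    obtain ⟨n, hn⟩ := exists_nat_gt (-y)
    exact ⟨n, by linarith⟩
  rw [hunion, measure_univ] at h
  by_contra hcon
  push_neg at hcon
  have hle : ∀ n : ℕ, ν (Ici (-(n : ℝ))) ≤ ENNReal.ofReal u := by
    intro n
    have := hcon (-(n : ℝ))
    have h0 : ν (Ici (-(n : ℝ))) = ENNReal.ofReal (tailFn ν (-(n : ℝ))) :=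
      (ofReal_tailFn ν _).symm
    rw [h0]
    exact ENNReal.ofReal_le_ofReal this
  have hlim : (1 : ENNReal) ≤ ENNReal.ofReal u := le_of_tendsto' h hle
  have : (1 : ENNReal) ≤ ENNReal.ofReal 1 := hlim.trans (ENNReal.ofReal_le_ofReal hu.le)
  have hu1 : ENNReal.ofReal u < 1 := lt_of_le_of_lt (ENNReal.ofReal_le_ofReal (le_max_left u 0))
    (by rw [← ENNReal.ofReal_one]
        exact (ENNReal.ofReal_lt_ofReal_iff_of_nonneg (le_max_right u 0)).2
          (max_lt hu one_pos))
  exact absurd (lt_of_le_of_lt hlim hu1) (lt_irrefl _)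

lemma tailQ_set_nonempty {u : ℝ} (hu : 0 < u) : {x : ℝ | tailFn ν x < u}.Nonempty :=
  exists_tailFn_lt ν hu

lemma tailQ_set_bddBelow {u : ℝ} (hu : u < 1) : BddBelow {x : ℝ | tailFn ν x < u} := by
  obtain ⟨y, hy⟩ := exists_lt_tailFn ν hu
  refine ⟨y, fun z hz => ?_⟩
  by_contra hzy
  push_neg at hzy
  have := tailFn_antitone ν hzy.le
  simp only [mem_setOf_eq] at hz
  linarith

lemma le_tailQ {u x : ℝ} (hu : 0 < u) (h : u ≤ tailFn ν x) : x ≤ tailQ ν u := by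
  apply le_csInf (tailQ_set_nonempty ν hu)
  intro y hy
  simp only [mem_setOf_eq] at hy
  by_contra hxy
  push_neg at hxy
  have := tailFn_antitone ν hxy.le
  linarith

lemma tailQ_le {u x : ℝ} (hu : u < 1) (h : tailFn ν x < u) : tailQ ν u ≤ x :=
  csInf_le (tailQ_set_bddBelow ν hu) h

lemma tailQ_antitoneOn_s9 : AntitoneOn (tailQ ν) (Ioo 0 1) := by
  intro u hu v hv huv
  exact csInf_le_csInf (tailQ_set_bddBelow ν hv.2) (tailQ_set_nonempty ν hu.1)
    (fun x hx => lt_of_lt_of_le hx huv)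

end Tail
section Push
variable (ν : Measure ℝ) [IsProbabilityMeasure ν]

lemma restrict_Ioc_eq_Ioo :
    volume.restrict (Ioc (0:ℝ) 1) = volume.restrict (Ioo (0:ℝ) 1) :=
  (Measure.restrict_congr_set Ioo_ae_eq_Ioc).symm

lemma aemeasurable_tailQ : AEMeasurable (tailQ ν) (volume.restrict (Ioc (0:ℝ) 1)) := by
  rw [restrict_Ioc_eq_Ioo]
  exact aemeasurable_restrict_of_antitoneOn measurableSet_Ioo (tailQ_antitoneOn_s9 ν)

lemma tendsto_measure_Ici_seq (x : ℝ) :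
    Tendsto (fun n : ℕ => ν (Ici (x - 1 / (n + 1)))) atTop (𝓝 (ν (Ici x))) := by
  have h : Tendsto (fun n : ℕ => ν (Ici (x - 1 / (n + 1)))) atTop
      (𝓝 (ν (⋂ n : ℕ, Ici (x - 1 / (n + 1 : ℝ))))) := by
    apply tendsto_measure_iInter_atTop
    · exact fun n => measurableSet_Ici.nullMeasurableSet
    · intro m n hmn
      apply Ici_subset_Ici.2
      have : 1 / (n + 1 : ℝ) ≤ 1 / (m + 1 : ℝ) := by
        apply one_div_le_one_div_of_le (by positivity)
        have hc : (m:ℝ) ≤ n := Nat.cast_le.2 hmn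
        linarith
      linarith
    · exact ⟨0, measure_ne_top _ _⟩
  have heq : (⋂ n : ℕ, Ici (x - 1 / (n + 1 : ℝ))) = Ici x := by
    ext y
    simp only [mem_iInter, mem_Ici]
    constructor
    · intro hy
      by_contra hxy
      push_neg at hxy
      obtain ⟨n, hn⟩ := exists_nat_one_div_lt (show (0:ℝ) < x - y by linarith)
      have := hy n
      linarith
    · intro hy n
      have : (0:ℝ) < 1 / (n + 1 : ℝ) := by positivity
      linarith
  rwa [heq] at h

lemma map_tailQ : Measure.map (tailQ ν) (volume.restrict (Ioc (0:ℝ) 1)) = ν := by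
  set m := Measure.map (tailQ ν) (volume.restrict (Ioc (0:ℝ) 1)) with hm
  have happ : ∀ x : ℝ, m (Ici x) = volume (tailQ ν ⁻¹' (Ici x) ∩ Ioc 0 1) := by
    intro x
    rw [hm, Measure.map_apply_of_aemeasurable (aemeasurable_tailQ ν) measurableSet_Ici,
      Measure.restrict_apply' measurableSet_Ioc]
  have key : ∀ x : ℝ, m (Ici x) = ν (Ici x) := by
    intro x
    have lower : ν (Ici x) ≤ m (Ici x) := by
      rw [happ, ← ofReal_tailFn]
      have hsub : Ioc 0 (tailFn ν x) ⊆ tailQ ν ⁻¹' (Ici x) ∩ Ioc 0 1 := by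
        intro u hu
        refine ⟨?_, hu.1, hu.2.trans (tailFn_le_one ν x)⟩
        exact le_tailQ ν hu.1 hu.2
      calc ENNReal.ofReal (tailFn ν x) ≤ volume (Ioc 0 (tailFn ν x)) := by
            rw [Real.volume_Ioc]; simp
        _ ≤ _ := measure_mono hsub
    have upper : m (Ici x) ≤ ν (Ici x) := by
      have step : ∀ n : ℕ, m (Ici x) ≤ ν (Ici (x - 1 / (n + 1))) := by
        intro n
        set x' := x - 1 / (n + 1 : ℝ) with hx'
        have hx'lt : x' < x := by
          have : (0:ℝ) < 1 / (n + 1 : ℝ) := by positivity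
          simp only [hx']; linarith
        have hsub : tailQ ν ⁻¹' (Ici x) ∩ Ioc 0 1 ⊆ Ioc 0 (tailFn ν x') ∪ {1} := by
          intro u ⟨h1, h2⟩
          by_cases hu1 : u = 1
          · exact Or.inr (by simp [hu1])
          · left
            have hult : u < 1 := lt_of_le_of_ne h2.2 hu1
            refine ⟨h2.1, ?_⟩
            by_contra hcon
            push_neg at hcon
            have := tailQ_le ν hult hcon
            simp only [mem_preimage, mem_Ici] at h1
            linarith
        rw [happ]
        calc volume (tailQ ν ⁻¹' (Ici x) ∩ Ioc 0 1) ≤ volume (Ioc 0 (tailFn ν x') ∪ {1}) :=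
              measure_mono hsub
          _ ≤ volume (Ioc 0 (tailFn ν x')) + volume ({1} : Set ℝ) := measure_union_le _ _
          _ = ENNReal.ofReal (tailFn ν x') := by
              rw [Real.volume_Ioc, Real.volume_singleton, add_zero, sub_zero]
          _ = ν (Ici x') := ofReal_tailFn ν x'
      exact ge_of_tendsto' (tendsto_measure_Ici_seq ν x) step
    exact le_antisymm upper lower
  have hfin : IsFiniteMeasure m := by
    constructor
    rw [hm, Measure.map_apply_of_aemeasurable (aemeasurable_tailQ ν) MeasurableSet.univ]
    simp only [preimage_univ, Measure.restrict_apply_univ]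
    rw [Real.volume_Ioc]
    simp
  exact Measure.ext_of_Ici m ν key

lemma integrable_tailQ (hint : Integrable id ν) :
    Integrable (tailQ ν) (volume.restrict (Ioc (0:ℝ) 1)) := by
  have hmap : Integrable id (Measure.map (tailQ ν) (volume.restrict (Ioc (0:ℝ) 1))) := by
    rw [map_tailQ]; exact hint
  have h := (integrable_map_measure (f := tailQ ν) (g := id)
    (by rw [map_tailQ]; exact hint.aestronglyMeasurable)
    (aemeasurable_tailQ ν)).1 hmap
  simpa [Function.comp] using h

lemma setIntegral_comp_tailQ (f : ℝ → ℝ) (hf : AEStronglyMeasurable f ν) :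
    ∫ u in Ioc (0:ℝ) 1, f (tailQ ν u) = ∫ s, f s ∂ν := by
  conv_rhs => rw [← map_tailQ ν]
  rw [integral_map (aemeasurable_tailQ ν) (by rw [map_tailQ]; exact hf)]

end Push
section Duality
variable (ν : Measure ℝ) [IsProbabilityMeasure ν]

lemma callFn_eq (K : ℝ) :
    callFn ν K = ∫ u in Ioc (0:ℝ) 1, max (tailQ ν u - K) 0 :=
  (setIntegral_comp_tailQ ν (fun s => max (s - K) 0)
    (((continuous_id.sub continuous_const).max continuous_const).aestronglyMeasurable)).symm

lemma integrable_call_tailQ (hint : Integrable id ν) (K : ℝ) :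
    Integrable (fun u => max (tailQ ν u - K) 0) (volume.restrict (Ioc (0:ℝ) 1)) :=
  ((integrable_tailQ ν hint).sub (integrable_const K)).pos_part

lemma callFn_nonneg (K : ℝ) : 0 ≤ callFn ν K :=
  integral_nonneg fun s => le_max_right _ _

lemma integral_tailQ_eq_mean :
    ∫ u in Ioc (0:ℝ) 1, tailQ ν u = ∫ s, s ∂ν := by
  simpa using setIntegral_comp_tailQ ν (fun s => s) aestronglyMeasurable_id

lemma setIntegral_const_Ioc (K l : ℝ) (hl : 0 ≤ l) :
    ∫ _ in Ioc (0:ℝ) l, K = l * K := by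
  rw [setIntegral_const, Real.volume_real_Ioc_of_le hl, sub_zero, smul_eq_mul]

lemma duality_le (hint : Integrable id ν) (K : ℝ) {l : ℝ} (hl : l ∈ Ioc (0:ℝ) 1) :
    ∫ u in Ioc (0:ℝ) l, tailQ ν u ≤ callFn ν K + l * K := by
  have hIl : IntegrableOn (tailQ ν) (Ioc (0:ℝ) l) volume :=
    (show IntegrableOn (tailQ ν) (Ioc (0:ℝ) 1) volume from integrable_tailQ ν hint).mono_set (Ioc_subset_Ioc le_rfl hl.2)
  have hIc : IntegrableOn (fun u => max (tailQ ν u - K) 0) (Ioc (0:ℝ) l) volume :=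
    (show IntegrableOn (fun u => max (tailQ ν u - K) 0) (Ioc (0:ℝ) 1) volume from integrable_call_tailQ ν hint K).mono_set (Ioc_subset_Ioc le_rfl hl.2)
  have step1 : ∫ u in Ioc (0:ℝ) l, (tailQ ν u - K) ≤ ∫ u in Ioc (0:ℝ) l, max (tailQ ν u - K) 0 :=
    setIntegral_mono (hIl.sub (integrable_const K)) hIc fun u => le_max_left _ _
  have step2 : ∫ u in Ioc (0:ℝ) l, max (tailQ ν u - K) 0
      ≤ ∫ u in Ioc (0:ℝ) 1, max (tailQ ν u - K) 0 := by
    apply setIntegral_mono_set (integrable_call_tailQ ν hint K)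
    · exact Eventually.of_forall fun u => le_max_right _ _
    · exact HasSubset.Subset.eventuallyLE (Ioc_subset_Ioc le_rfl hl.2)
  have step3 : ∫ u in Ioc (0:ℝ) l, (tailQ ν u - K)
      = (∫ u in Ioc (0:ℝ) l, tailQ ν u) - l * K := by
    rw [integral_sub hIl (integrable_const K), setIntegral_const_Ioc _ _ hl.1.le]
  rw [callFn_eq]
  linarith

lemma duality_eq (hint : Integrable id ν) {l : ℝ} (hl : l ∈ Ioo (0:ℝ) 1) :
    callFn ν (tailQ ν l) + l * tailQ ν l = ∫ u in Ioc (0:ℝ) l, tailQ ν u := by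
  set K := tailQ ν l with hK
  have hIl : IntegrableOn (tailQ ν) (Ioc (0:ℝ) l) volume :=
    (show IntegrableOn (tailQ ν) (Ioc (0:ℝ) 1) volume from integrable_tailQ ν hint).mono_set (Ioc_subset_Ioc le_rfl hl.2.le)
  have hsplit : Ioc (0:ℝ) 0 ∪ Ioc (0:ℝ) 1 = Ioc (0:ℝ) 1 := by simp
  have hunion : Ioc (0:ℝ) l ∪ Ioc l 1 = Ioc (0:ℝ) 1 := Ioc_union_Ioc_eq_Ioc hl.1.le hl.2.le
  have hdisj : Disjoint (Ioc (0:ℝ) l) (Ioc l 1) := (Ioc_disjoint_Ioc_of_le le_rfl)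
  have hint1 : IntegrableOn (fun u => max (tailQ ν u - K) 0) (Ioc (0:ℝ) l) volume :=
    (show IntegrableOn (fun u => max (tailQ ν u - K) 0) (Ioc (0:ℝ) 1) volume from integrable_call_tailQ ν hint K).mono_set (Ioc_subset_Ioc le_rfl hl.2.le)
  have hint2 : IntegrableOn (fun u => max (tailQ ν u - K) 0) (Ioc l 1) volume :=
    (show IntegrableOn (fun u => max (tailQ ν u - K) 0) (Ioc (0:ℝ) 1) volume from integrable_call_tailQ ν hint K).mono_set (Ioc_subset_Ioc hl.1.le le_rfl)
  have split : callFn ν K = (∫ u in Ioc (0:ℝ) l, max (tailQ ν u - K) 0)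
      + ∫ u in Ioc l 1, max (tailQ ν u - K) 0 := by
    rw [callFn_eq, ← hunion, setIntegral_union hdisj measurableSet_Ioc hint1 hint2]
  have part1 : ∫ u in Ioc (0:ℝ) l, max (tailQ ν u - K) 0
      = ∫ u in Ioc (0:ℝ) l, (tailQ ν u - K) := by
    apply setIntegral_congr_fun measurableSet_Ioc
    intro u hu
    have hu1 : u ∈ Ioo (0:ℝ) 1 := ⟨hu.1, lt_of_le_of_lt hu.2 hl.2⟩
    have : K ≤ tailQ ν u := tailQ_antitoneOn_s9 ν hu1 hl hu.2
    simp [max_eq_left, sub_nonneg.2 this]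
  have part2 : ∫ u in Ioc l 1, max (tailQ ν u - K) 0 = 0 := by
    have hae : ∀ᵐ u ∂volume.restrict (Ioc l 1), max (tailQ ν u - K) 0 = 0 := by
      rw [Measure.restrict_congr_set (Ioo_ae_eq_Ioc (a := l) (b := 1)).symm]
      refine (ae_restrict_iff' measurableSet_Ioo).2 (Eventually.of_forall fun u hu => ?_)
      have hu1 : u ∈ Ioo (0:ℝ) 1 := ⟨lt_trans hl.1 hu.1, hu.2⟩
      have : tailQ ν u ≤ K := tailQ_antitoneOn_s9 ν hl hu1 hu.1.le
      simp [max_eq_right, sub_nonpos.2 this]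
    calc ∫ u in Ioc l 1, max (tailQ ν u - K) 0 = ∫ _ in Ioc l 1, (0:ℝ) :=
          integral_congr_ae hae
      _ = 0 := by simp
  have part3 : ∫ u in Ioc (0:ℝ) l, (tailQ ν u - K)
      = (∫ u in Ioc (0:ℝ) l, tailQ ν u) - l * K := by
    rw [integral_sub hIl (integrable_const K), setIntegral_const_Ioc _ _ hl.1.le]
  rw [split, part1, part2, part3]
  ring

end Duality
section Avar
variable (ν : Measure ℝ) [IsProbabilityMeasure ν]

lemma integrableOn_tailQ_Icc (hint : Integrable id ν) :
    IntegrableOn (tailQ ν) (Icc (0:ℝ) 1) volume := by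
  have : volume.restrict (Icc (0:ℝ) 1) = volume.restrict (Ioc (0:ℝ) 1) :=
    (Measure.restrict_congr_set Ioc_ae_eq_Icc).symm
  rw [IntegrableOn, this]
  exact integrable_tailQ ν hint

lemma continuousOn_F (hint : Integrable id ν) :
    ContinuousOn (fun x => ∫ u in Ioc (0:ℝ) x, tailQ ν u) (Icc (0:ℝ) 1) :=
  intervalIntegral.continuousOn_primitive (integrableOn_tailQ_Icc ν hint)

lemma avar_eq_Ioc {l : ℝ} (hl : 0 < l) :
    avar ν l = (1 / l) * ∫ u in Ioc (0:ℝ) l, tailQ ν u := by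
  rw [avar, intervalIntegral.integral_of_le hl.le]

lemma continuousOn_avar (hint : Integrable id ν) :
    ContinuousOn (avar ν) (Ioo (0:ℝ) 1) := by
  have h1 : ContinuousOn (fun l : ℝ => (1 / l) * ∫ u in Ioc (0:ℝ) l, tailQ ν u)
      (Ioo (0:ℝ) 1) := by
    apply ContinuousOn.mul
    · exact continuousOn_const.div continuousOn_id fun x hx => ne_of_gt hx.1
    · exact (continuousOn_F ν hint).mono Ioo_subset_Icc_self
  exact h1.congr fun l hl => avar_eq_Ioc ν hl.1

lemma aemeasurable_avar (hint : Integrable id ν) :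
    AEMeasurable (avar ν) (volume.restrict (Ioc (0:ℝ) 1)) := by
  rw [restrict_Ioc_eq_Ioo]
  exact (continuousOn_avar ν hint).aemeasurable measurableSet_Ioo

lemma avar_antitoneOn (hint : Integrable id ν) : AntitoneOn (avar ν) (Ioc (0:ℝ) 1) := by
  intro u hu v hv huv
  rcases eq_or_lt_of_le huv with rfl | hlt
  · exact le_refl _
  · have hu1 : u ∈ Ioo (0:ℝ) 1 := ⟨hu.1, lt_of_lt_of_le hlt hv.2⟩
    set c := tailQ ν u with hc
    set A := ∫ w in Ioc (0:ℝ) u, tailQ ν w with hA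
    set B := ∫ w in Ioc u v, tailQ ν w with hB
    have hintu : IntegrableOn (tailQ ν) (Ioc (0:ℝ) u) volume :=
      (show IntegrableOn (tailQ ν) (Ioc (0:ℝ) 1) volume from integrable_tailQ ν hint).mono_set
        (Ioc_subset_Ioc le_rfl hu.2)
    have hintuv : IntegrableOn (tailQ ν) (Ioc u v) volume :=
      (show IntegrableOn (tailQ ν) (Ioc (0:ℝ) 1) volume from integrable_tailQ ν hint).mono_set
        (Ioc_subset_Ioc hu.1.le hv.2)
    have hAc : u * c ≤ A := by
      have : ∫ _ in Ioc (0:ℝ) u, c ≤ A := by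
        apply setIntegral_mono_on (integrableOn_const measure_Ioc_lt_top.ne) hintu
          measurableSet_Ioc
        intro w hw
        exact tailQ_antitoneOn_s9 ν ⟨hw.1, lt_of_le_of_lt hw.2 hu1.2⟩ hu1 hw.2
      rwa [setIntegral_const_Ioc _ _ hu.1.le] at this
    have hBc : B ≤ (v - u) * c := by
      have h0 : B ≤ ∫ _ in Ioc u v, c := by
        rw [hB, integral_Ioc_eq_integral_Ioo, integral_Ioc_eq_integral_Ioo]
        apply setIntegral_mono_on (hintuv.mono_set Ioo_subset_Ioc_self)
          (integrableOn_const measure_Ioo_lt_top.ne) measurableSet_Ioo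
        intro w hw
        exact tailQ_antitoneOn_s9 ν hu1 ⟨lt_trans hu.1 hw.1, lt_of_lt_of_le hw.2 hv.2⟩ hw.1.le
      have h1 : ∫ _ in Ioc u v, c = (v - u) * c := by
        rw [setIntegral_const, Real.volume_real_Ioc_of_le (by linarith), smul_eq_mul]
      linarith
    have hsplit : ∫ w in Ioc (0:ℝ) v, tailQ ν w = A + B := by
      rw [hA, hB, ← setIntegral_union (Ioc_disjoint_Ioc_of_le le_rfl) measurableSet_Ioc hintu hintuv,
        Ioc_union_Ioc_eq_Ioc hu.1.le (le_of_lt hlt)]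
    rw [avar_eq_Ioc ν hu.1, avar_eq_Ioc ν (lt_trans hu.1 hlt), hsplit]
    rw [div_mul_eq_mul_div, div_mul_eq_mul_div, div_le_div_iff₀ (by linarith [hu.1, hlt]) hu.1]
    have huv0 : 0 ≤ v - u := by linarith
    nlinarith [hu.1, hAc, hBc]
end Avar
section PartOne
variable (ν : Measure ℝ) [IsProbabilityMeasure ν]

lemma split_call (hint : Integrable id ν) (K : ℝ) {l : ℝ} (hl : l ∈ Ioc (0:ℝ) 1) :
    callFn ν K = (∫ u in Ioc (0:ℝ) l, max (tailQ ν u - K) 0)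
      + ∫ u in Ioc l 1, max (tailQ ν u - K) 0 := by
  rw [callFn_eq, ← Ioc_union_Ioc_eq_Ioc hl.1.le hl.2,
    setIntegral_union (Ioc_disjoint_Ioc_of_le le_rfl) measurableSet_Ioc
      ((show IntegrableOn (fun u => max (tailQ ν u - K) 0) (Ioc (0:ℝ) 1) volume from
        integrable_call_tailQ ν hint K).mono_set (Ioc_subset_Ioc le_rfl hl.2))
      ((show IntegrableOn (fun u => max (tailQ ν u - K) 0) (Ioc (0:ℝ) 1) volume from
        integrable_call_tailQ ν hint K).mono_set (Ioc_subset_Ioc hl.1.le le_rfl))]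

lemma upper_piece_zero (K : ℝ) {l : ℝ} (hl : l ∈ Ioc (0:ℝ) 1)
    (hup : ∀ u ∈ Ioo l 1, tailQ ν u ≤ K) :
    ∫ u in Ioc l 1, max (tailQ ν u - K) 0 = 0 := by
  rcases eq_or_lt_of_le hl.2 with rfl | hl1
  · simp
  · rw [integral_Ioc_eq_integral_Ioo]
    rw [setIntegral_congr_fun measurableSet_Ioo
      (show EqOn (fun u => max (tailQ ν u - K) 0) (fun _ => (0:ℝ)) (Ioo l 1) from
        fun u hu => max_eq_right (sub_nonpos.2 (hup u hu)))]
    simp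

lemma lower_piece_eq (hint : Integrable id ν) (K : ℝ) {l : ℝ} (hl : l ∈ Ioc (0:ℝ) 1)
    (hlow : ∀ u ∈ Ioo (0:ℝ) l, K ≤ tailQ ν u) :
    ∫ u in Ioc (0:ℝ) l, max (tailQ ν u - K) 0 = (∫ u in Ioc (0:ℝ) l, tailQ ν u) - l * K := by
  have hIl : IntegrableOn (tailQ ν) (Ioc (0:ℝ) l) volume :=
    (show IntegrableOn (tailQ ν) (Ioc (0:ℝ) 1) volume from integrable_tailQ ν hint).mono_set
      (Ioc_subset_Ioc le_rfl hl.2)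
  have h1 : ∫ u in Ioc (0:ℝ) l, max (tailQ ν u - K) 0 = ∫ u in Ioc (0:ℝ) l, (tailQ ν u - K) := by
    rw [integral_Ioc_eq_integral_Ioo, integral_Ioc_eq_integral_Ioo]
    exact setIntegral_congr_fun measurableSet_Ioo
      fun u hu => max_eq_left (sub_nonneg.2 (hlow u hu))
  rw [h1, integral_sub hIl (integrable_const K), setIntegral_const_Ioc _ _ hl.1.le]

lemma chord_le_call (hint : Integrable id ν) (K : ℝ) {l : ℝ} (hl : l ∈ Ioc (0:ℝ) 1) :
    (∫ u in Ioc (0:ℝ) l, tailQ ν u) - l * K ≤ callFn ν K := by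
  have := duality_le ν hint K hl
  linarith

end PartOne

section TwoMeasures
variable (μ ρ : Measure ℝ) [IsProbabilityMeasure μ] [IsProbabilityMeasure ρ]

lemma limit_one (hμ : Integrable id μ) (hρ : Integrable id ρ)
    (h : ∀ l ∈ Ioo (0:ℝ) 1, (∫ u in Ioc (0:ℝ) l, tailQ μ u) ≤ ∫ u in Ioc (0:ℝ) l, tailQ ρ u) :
    (∫ u in Ioc (0:ℝ) 1, tailQ μ u) ≤ ∫ u in Ioc (0:ℝ) 1, tailQ ρ u := by
  have hne : (𝓝[Ioo (0:ℝ) 1] 1).NeBot := by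
    apply mem_closure_iff_nhdsWithin_neBot.1
    rw [closure_Ioo (zero_ne_one)]
    exact right_mem_Icc.2 zero_le_one
  have tμ : Tendsto (fun x => ∫ u in Ioc (0:ℝ) x, tailQ μ u) (𝓝[Ioo (0:ℝ) 1] 1)
      (𝓝 (∫ u in Ioc (0:ℝ) 1, tailQ μ u)) :=
    ((continuousOn_F μ hμ) 1 (right_mem_Icc.2 zero_le_one)).mono Ioo_subset_Icc_self
  have tρ : Tendsto (fun x => ∫ u in Ioc (0:ℝ) x, tailQ ρ u) (𝓝[Ioo (0:ℝ) 1] 1)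
      (𝓝 (∫ u in Ioc (0:ℝ) 1, tailQ ρ u)) :=
    ((continuousOn_F ρ hρ) 1 (right_mem_Icc.2 zero_le_one)).mono Ioo_subset_Icc_self
  exact le_of_tendsto_of_tendsto tμ tρ (eventually_mem_nhdsWithin.mono fun x hx => h x hx)

lemma avar_dom_integral_dom (hμ : Integrable id μ) (hρ : Integrable id ρ)
    (h : ∀ l ∈ Ioo (0:ℝ) 1, avar μ l ≤ avar ρ l) :
    ∀ l ∈ Ioo (0:ℝ) 1, (∫ u in Ioc (0:ℝ) l, tailQ μ u) ≤ ∫ u in Ioc (0:ℝ) l, tailQ ρ u := by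
  intro l hl
  have := h l hl
  rw [avar_eq_Ioc μ hl.1, avar_eq_Ioc ρ hl.1] at this
  have hpos : 0 < 1 / l := one_div_pos.2 hl.1
  exact (mul_le_mul_iff_right₀ hpos).1 this

lemma call_imp_avar (hμ : Integrable id μ) (hρ : Integrable id ρ)
    (hcall : ∀ K, callFn μ K ≤ callFn ρ K) :
    ∀ l ∈ Ioo (0:ℝ) 1, avar μ l ≤ avar ρ l := by
  intro l hl
  set K := tailQ ρ l with hK
  have h1 : (∫ u in Ioc (0:ℝ) l, tailQ μ u) ≤ callFn μ K + l * K :=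
    duality_le μ hμ K ⟨hl.1, hl.2.le⟩
  have h2 : callFn ρ K + l * K = ∫ u in Ioc (0:ℝ) l, tailQ ρ u := duality_eq ρ hρ hl
  have h3 : (∫ u in Ioc (0:ℝ) l, tailQ μ u) ≤ ∫ u in Ioc (0:ℝ) l, tailQ ρ u := by
    have := hcall K
    linarith
  rw [avar_eq_Ioc μ hl.1, avar_eq_Ioc ρ hl.1]
  exact mul_le_mul_of_nonneg_left h3 (one_div_pos.2 hl.1).le

lemma avar_imp_call (hμ : Integrable id μ) (hρ : Integrable id ρ)
    (h : ∀ l ∈ Ioo (0:ℝ) 1, avar μ l ≤ avar ρ l) :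
    ∀ K, callFn μ K ≤ callFn ρ K := by
  have hI := avar_dom_integral_dom μ ρ hμ hρ h
  have hI1 := limit_one μ ρ hμ hρ hI
  intro K
  by_cases hS : ∃ u ∈ Ioo (0:ℝ) 1, K < tailQ μ u
  · set S := {u | u ∈ Ioo (0:ℝ) 1 ∧ K < tailQ μ u} with hSdef
    obtain ⟨u₀, hu₀, hu₀K⟩ := hS
    have hne : S.Nonempty := ⟨u₀, hu₀, hu₀K⟩
    have hbdd : BddAbove S := ⟨1, fun x hx => hx.1.2.le⟩
    set L := sSup S with hLdef
    have hL0 : 0 < L := lt_of_lt_of_le hu₀.1 (le_csSup hbdd ⟨hu₀, hu₀K⟩)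
    have hL1 : L ≤ 1 := csSup_le hne fun x hx => hx.1.2.le
    have hLmem : L ∈ Ioc (0:ℝ) 1 := ⟨hL0, hL1⟩
    have hlow : ∀ u ∈ Ioo (0:ℝ) L, K ≤ tailQ μ u := by
      intro u hu
      obtain ⟨v, hvS, huv⟩ := exists_lt_of_lt_csSup hne hu.2
      exact le_trans hvS.2.le
        (tailQ_antitoneOn_s9 μ ⟨hu.1, lt_of_lt_of_le hu.2 hL1⟩ hvS.1 huv.le)
    have hupp : ∀ u ∈ Ioo L 1, tailQ μ u ≤ K := by
      intro u hu
      by_contra hcon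
      push_neg at hcon
      have : u ∈ S := ⟨⟨lt_trans hL0 hu.1, hu.2⟩, hcon⟩
      exact absurd (le_csSup hbdd this) (not_le.2 hu.1)
    have hform : callFn μ K = (∫ u in Ioc (0:ℝ) L, tailQ μ u) - L * K := by
      rw [split_call μ hμ K hLmem, upper_piece_zero μ K hLmem hupp,
        lower_piece_eq μ hμ K hLmem hlow, add_zero]
    rcases eq_or_lt_of_le hL1 with hLeq | hLlt
    · rw [hform, hLeq]
      calc (∫ u in Ioc (0:ℝ) 1, tailQ μ u) - 1 * K
          ≤ (∫ u in Ioc (0:ℝ) 1, tailQ ρ u) - 1 * K := by linarith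
        _ ≤ callFn ρ K := chord_le_call ρ hρ K ⟨zero_lt_one, le_rfl⟩
    · rw [hform]
      calc (∫ u in Ioc (0:ℝ) L, tailQ μ u) - L * K
          ≤ (∫ u in Ioc (0:ℝ) L, tailQ ρ u) - L * K := by
            linarith [hI L ⟨hL0, hLlt⟩]
        _ ≤ callFn ρ K := chord_le_call ρ hρ K hLmem
  · push_neg at hS
    have h0 : callFn μ K = 0 := by
      rw [callFn_eq, integral_Ioc_eq_integral_Ioo]
      rw [setIntegral_congr_fun measurableSet_Ioo
        (show EqOn (fun u => max (tailQ μ u - K) 0) (fun _ => (0:ℝ)) (Ioo (0:ℝ) 1) from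
          fun u hu => max_eq_right (sub_nonpos.2 (hS u hu)))]
      simp
    rw [h0]
    exact callFn_nonneg ρ K

end TwoMeasures
section HL
variable (μ ρ : Measure ℝ) [IsProbabilityMeasure μ] [IsProbabilityMeasure ρ]

lemma hl_apply (ν : Measure ℝ) [IsProbabilityMeasure ν] (hint : Integrable id ν) (y : ℝ) :
    hlTransform ν (Ici y) = volume (avar ν ⁻¹' (Ici y) ∩ Ioc 0 1) := by
  rw [hlTransform, Measure.map_apply_of_aemeasurable (aemeasurable_avar ν hint) measurableSet_Ici,
    Measure.restrict_apply' measurableSet_Ioc]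

lemma avar_dom_Ioc (hμ : Integrable id μ) (hρ : Integrable id ρ)
    (h : ∀ l ∈ Ioo (0:ℝ) 1, avar μ l ≤ avar ρ l) :
    ∀ l ∈ Ioc (0:ℝ) 1, avar μ l ≤ avar ρ l := by
  intro l hl
  rcases eq_or_lt_of_le hl.2 with hleq | hlt
  · rw [hleq, avar_eq_Ioc μ zero_lt_one, avar_eq_Ioc ρ zero_lt_one]
    have := limit_one μ ρ hμ hρ (avar_dom_integral_dom μ ρ hμ hρ h)
    norm_num
    linarith
  · exact h l ⟨hl.1, hlt⟩

lemma hl_dom_of_avar_dom (hμ : Integrable id μ) (hρ : Integrable id ρ)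
    (h : ∀ l ∈ Ioo (0:ℝ) 1, avar μ l ≤ avar ρ l) :
    ∀ y : ℝ, hlTransform μ (Ici y) ≤ hlTransform ρ (Ici y) := by
  intro y
  have h' := avar_dom_Ioc μ ρ hμ hρ h
  rw [hl_apply μ hμ y, hl_apply ρ hρ y]
  apply measure_mono
  rintro u ⟨hu1, hu2⟩
  exact ⟨le_trans hu1 (h' u hu2), hu2⟩

lemma avar_dom_of_hl_dom (hμ : Integrable id μ) (hρ : Integrable id ρ)
    (hhl : ∀ y : ℝ, hlTransform μ (Ici y) ≤ hlTransform ρ (Ici y)) :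
    ∀ l ∈ Ioo (0:ℝ) 1, avar μ l ≤ avar ρ l := by
  intro l hl
  set y := avar μ l with hy
  have hsub : Ioc (0:ℝ) l ⊆ avar μ ⁻¹' (Ici y) ∩ Ioc 0 1 := by
    intro u hu
    have humem : u ∈ Ioc (0:ℝ) 1 := ⟨hu.1, hu.2.trans hl.2.le⟩
    refine ⟨?_, humem⟩
    exact avar_antitoneOn μ hμ humem ⟨hl.1, hl.2.le⟩ hu.2
  have hlvol : ENNReal.ofReal l ≤ hlTransform μ (Ici y) := by
    rw [hl_apply μ hμ y]
    calc ENNReal.ofReal l = volume (Ioc (0:ℝ) l) := by rw [Real.volume_Ioc, sub_zero]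
      _ ≤ _ := measure_mono hsub
  by_cases hex : ∃ u, u ∈ Ioc (0:ℝ) 1 ∧ l ≤ u ∧ y ≤ avar ρ u
  · obtain ⟨u, hu, hlu, hyu⟩ := hex
    exact le_trans hyu (avar_antitoneOn ρ hρ ⟨hl.1, hl.2.le⟩ hu hlu)
  · push_neg at hex
    set U := Ioo (0:ℝ) l ∩ avar ρ ⁻¹' (Iio y) with hU
    have hUopen : IsOpen U := by
      apply ContinuousOn.isOpen_inter_preimage
      · exact (continuousOn_avar ρ hρ).mono (Ioo_subset_Ioo le_rfl hl.2.le)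
      · exact isOpen_Ioo
      · exact isOpen_Iio
    have hsub2 : avar ρ ⁻¹' (Ici y) ∩ Ioc 0 1 ⊆ Ioo (0:ℝ) l \ U := by
      rintro u ⟨hu1, hu2⟩
      simp only [mem_preimage, mem_Ici] at hu1
      have hul : u < l := by
        by_contra hcon
        push_neg at hcon
        exact absurd hu1 (not_le.2 (hex u hu2 hcon))
      refine ⟨⟨hu2.1, hul⟩, ?_⟩
      rw [hU]
      rintro ⟨-, hu3⟩
      simp only [mem_preimage, mem_Iio] at hu3
      linarith
    have hUsub : U ⊆ Ioo (0:ℝ) l := inter_subset_left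
    have hvol : volume (Ioo (0:ℝ) l \ U) = ENNReal.ofReal l - volume U := by
      rw [measure_diff hUsub hUopen.measurableSet.nullMeasurableSet
        (lt_of_le_of_lt (measure_mono hUsub) (by rw [Real.volume_Ioo]; exact ENNReal.ofReal_lt_top)).ne,
        Real.volume_Ioo, sub_zero]
    have hchain : ENNReal.ofReal l ≤ ENNReal.ofReal l - volume U := by
      calc ENNReal.ofReal l ≤ hlTransform μ (Ici y) := hlvol
        _ ≤ hlTransform ρ (Ici y) := hhl y
        _ = volume (avar ρ ⁻¹' (Ici y) ∩ Ioc 0 1) := hl_apply ρ hρ y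
        _ ≤ volume (Ioo (0:ℝ) l \ U) := measure_mono hsub2
        _ = _ := hvol
    have hU0 : volume U = 0 := by
      by_contra hcon
      have hlt : ENNReal.ofReal l - volume U < ENNReal.ofReal l := by
        apply ENNReal.sub_lt_self ENNReal.ofReal_ne_top
        · exact ne_of_gt (ENNReal.ofReal_pos.2 hl.1)
        · exact hcon
      exact absurd (lt_of_le_of_lt hchain hlt) (lt_irrefl _)
    have hUempty : U = ∅ := by
      by_contra hcon
      have := hUopen.measure_pos volume (nonempty_iff_ne_empty.2 hcon)
      rw [hU0] at this
      exact absurd this (lt_irrefl _)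
    have hforall : ∀ u ∈ Ioo (0:ℝ) l, y ≤ avar ρ u := by
      intro u hu
      by_contra hcon
      push_neg at hcon
      have : u ∈ U := ⟨hu, by simpa using hcon⟩
      rw [hUempty] at this
      exact this
    have hne : (𝓝[Ioo (0:ℝ) l] l).NeBot := by
      apply mem_closure_iff_nhdsWithin_neBot.1
      rw [closure_Ioo (ne_of_lt hl.1)]
      exact right_mem_Icc.2 hl.1.le
    have htend : Tendsto (avar ρ) (𝓝[Ioo (0:ℝ) l] l) (𝓝 (avar ρ l)) := by
      have hca : ContinuousAt (avar ρ) l :=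
        (continuousOn_avar ρ hρ).continuousAt (isOpen_Ioo.mem_nhds hl)
      exact hca.continuousWithinAt
    exact ge_of_tendsto htend (eventually_mem_nhdsWithin.mono fun x hx => hforall x hx)

end HL
section Subgrad

variable {g : ℝ → ℝ}

noncomputable def subg (g : ℝ → ℝ) (t : ℝ) : ℝ :=
  sInf ((fun v => (g v - g t) / (v - t)) '' Ioi t)

lemma subg_set_nonempty (t : ℝ) : ((fun v => (g v - g t) / (v - t)) '' Ioi t).Nonempty :=
  (nonempty_Ioi (a := t)).image _

lemma subg_set_bddBelow (hg : Monotone g) (t : ℝ) :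
    BddBelow ((fun v => (g v - g t) / (v - t)) '' Ioi t) := by
  refine ⟨0, ?_⟩
  rintro z ⟨v, hv, rfl⟩
  exact div_nonneg (sub_nonneg.2 (hg (le_of_lt hv))) (by simp only [mem_Ioi] at hv; linarith)

lemma subg_nonneg (hg : Monotone g) (t : ℝ) : 0 ≤ subg g t :=
  le_csInf (subg_set_nonempty t) (by
    rintro z ⟨v, hv, rfl⟩
    exact div_nonneg (sub_nonneg.2 (hg (le_of_lt hv))) (by simp only [mem_Ioi] at hv; linarith))

lemma subg_le_slope (hg : Monotone g) {t v : ℝ} (htv : t < v) :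
    subg g t ≤ (g v - g t) / (v - t) :=
  csInf_le (subg_set_bddBelow hg t) ⟨v, htv, rfl⟩

lemma support_line_le (hg : Monotone g) (hc : ConvexOn ℝ univ g) (t x : ℝ) :
    g t + subg g t * (x - t) ≤ g x := by
  rcases lt_trichotomy x t with hxt | rfl | htx
  · have hle : (g x - g t) / (x - t) ≤ subg g t := by
      apply le_csInf (subg_set_nonempty t)
      rintro z ⟨v, hv, rfl⟩
      exact hc.secant_mono (mem_univ t) (mem_univ x) (mem_univ v) (ne_of_lt hxt)
        (ne_of_gt hv) (le_of_lt (hxt.trans hv))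
    have hx : x - t < 0 := by linarith
    have := (div_le_iff_of_neg hx).1 hle
    linarith
  · simp
  · have := subg_le_slope hg htx
    have hx : 0 < x - t := by linarith
    have := (le_div_iff₀ hx).1 this
    linarith

lemma subg_mono (hg : Monotone g) (hc : ConvexOn ℝ univ g) : Monotone (subg g) := by
  intro t t' htt'
  rcases eq_or_lt_of_le htt' with rfl | hlt
  · exact le_rfl
  apply le_csInf (subg_set_nonempty t')
  rintro z ⟨v, hv, rfl⟩
  simp only [mem_Ioi] at hv
  have h1 : subg g t ≤ (g v - g t) / (v - t) := subg_le_slope hg (hlt.trans hv)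
  have h2 : (g t - g v) / (t - v) ≤ (g t' - g v) / (t' - v) :=
    hc.secant_mono (mem_univ v) (mem_univ t) (mem_univ t')
      (ne_of_lt (hlt.trans hv)) (ne_of_lt hv) htt'
  have e1 : (g t - g v) / (t - v) = (g v - g t) / (v - t) := by
    rw [← neg_div_neg_eq]; ring_nf
  have e2 : (g t' - g v) / (t' - v) = (g v - g t') / (v - t') := by
    rw [← neg_div_neg_eq]; ring_nf
  rw [e1, e2] at h2
  linarith

lemma chord_le_subg (hg : Monotone g) (hc : ConvexOn ℝ univ g) {a b : ℝ} (hab : a < b) :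
    (g b - g a) / (b - a) ≤ subg g b := by
  apply le_csInf (subg_set_nonempty b)
  rintro z ⟨v, hv, rfl⟩
  simp only [mem_Ioi] at hv
  have h2 : (g a - g b) / (a - b) ≤ (g v - g b) / (v - b) :=
    hc.secant_mono (mem_univ b) (mem_univ a) (mem_univ v)
      (ne_of_lt hab) (ne_of_gt hv) (le_of_lt (hab.trans hv))
  have e1 : (g a - g b) / (a - b) = (g b - g a) / (b - a) := by
    rw [← neg_div_neg_eq]; ring_nf
  rwa [e1] at h2

lemma chord_bound (hg : Monotone g) (hc : ConvexOn ℝ univ g) {a b x : ℝ}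
    (hax : a < x) (hxb : x ≤ b) : g x ≤ g a + subg g b * (x - a) := by
  have h1 : (g x - g a) / (x - a) ≤ subg g x := chord_le_subg hg hc hax
  have h2 : subg g x ≤ subg g b := subg_mono hg hc hxb
  have hx : 0 < x - a := by linarith
  have := (div_le_iff₀ hx).1 (h1.trans h2)
  linarith

end Subgrad
section Pwl

variable {g : ℝ → ℝ}

noncomputable def pwl (g : ℝ → ℝ) (a δ : ℝ) (N : ℕ) (x : ℝ) : ℝ :=
  g a + subg g a * (x - a) + ∑ j ∈ Finset.range N,
    (subg g (a + (j + 1 : ℕ) * δ) - subg g (a + (j : ℕ) * δ)) * max (x - (a + (j + 1 : ℕ) * δ)) 0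

lemma pwl_succ (a δ : ℝ) (N : ℕ) (x : ℝ) :
    pwl g a δ (N + 1) x = pwl g a δ N x
      + (subg g (a + (N + 1 : ℕ) * δ) - subg g (a + (N : ℕ) * δ))
        * max (x - (a + (N + 1 : ℕ) * δ)) 0 := by
  rw [pwl, pwl, Finset.sum_range_succ]
  ring

lemma pwl_le (hg : Monotone g) (hc : ConvexOn ℝ univ g) (a : ℝ) {δ : ℝ} (hδ : 0 < δ) (N : ℕ) :
    ∀ x, pwl g a δ N x ≤ g (min x (a + N * δ))
      + subg g (a + N * δ) * max (x - (a + N * δ)) 0 := by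
  induction N with
  | zero =>
    intro x
    rcases le_total x a with hxa | hax
    · simp only [Nat.cast_zero, zero_mul, add_zero, min_eq_left hxa,
        max_eq_right (by linarith : x - a ≤ 0)]
      have := support_line_le hg hc a x
      simp [pwl]
      linarith
    · simp only [Nat.cast_zero, zero_mul, add_zero, min_eq_right hax,
        max_eq_left (by linarith : 0 ≤ x - a)]
      simp [pwl]
  | succ N ih =>
    intro x
    have htN : a + (N : ℕ) * δ < a + (N + 1 : ℕ) * δ := by
      push_cast; nlinarith
    rw [pwl_succ]
    rcases le_total x (a + (N : ℕ) * δ) with h1 | h1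
    · have h2 : x ≤ a + (N + 1 : ℕ) * δ := le_of_lt (lt_of_le_of_lt h1 htN)
      rw [min_eq_left h2, max_eq_right (by linarith : x - (a + (N + 1 : ℕ) * δ) ≤ 0)]
      have := ih x
      rw [min_eq_left h1, max_eq_right (by linarith : x - (a + (N : ℕ) * δ) ≤ 0)] at this
      simpa using this
    · rcases le_total x (a + (N + 1 : ℕ) * δ) with h2 | h2
      · rw [min_eq_left h2, max_eq_right (by linarith : x - (a + (N + 1 : ℕ) * δ) ≤ 0)]
        have h3 := ih x
        rw [min_eq_right h1, max_eq_left (by linarith : 0 ≤ x - (a + (N : ℕ) * δ))] at h3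
        have h4 := support_line_le hg hc (a + (N : ℕ) * δ) x
        simpa using h3.trans h4
      · rw [min_eq_right h2,
          max_eq_left (by linarith : 0 ≤ x - (a + (N + 1 : ℕ) * δ))]
        have h3 := ih x
        rw [min_eq_right h1, max_eq_left (by linarith : 0 ≤ x - (a + (N : ℕ) * δ))] at h3
        have h4 := support_line_le hg hc (a + (N : ℕ) * δ) (a + (N + 1 : ℕ) * δ)
        have h5 : subg g (a + (N : ℕ) * δ) ≤ subg g (a + (N + 1 : ℕ) * δ) :=
          subg_mono hg hc (le_of_lt htN)
        have hd : a + (N + 1 : ℕ) * δ - (a + (N : ℕ) * δ) = δ := by push_cast; ring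
        nlinarith [h3, h4, h5]

lemma pwl_le_self (hg : Monotone g) (hc : ConvexOn ℝ univ g) (a : ℝ) {δ : ℝ} (hδ : 0 < δ)
    (N : ℕ) (x : ℝ) : pwl g a δ N x ≤ g x := by
  have h := pwl_le hg hc a hδ N x
  rcases le_total x (a + N * δ) with h1 | h1
  · rwa [min_eq_left h1, max_eq_right (by linarith : x - (a + N * δ) ≤ 0), mul_zero,
      add_zero] at h
  · rw [min_eq_right h1, max_eq_left (by linarith : 0 ≤ x - (a + N * δ))] at h
    exact h.trans (support_line_le hg hc (a + N * δ) x)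

lemma pwl_sum_subg (a δ : ℝ) (N : ℕ) :
    ∑ j ∈ Finset.range N, (subg g (a + (j + 1 : ℕ) * δ) - subg g (a + (j : ℕ) * δ))
      = subg g (a + N * δ) - subg g a := by
  have := Finset.sum_range_sub (f := fun j : ℕ => subg g (a + (j : ℕ) * δ)) N
  simpa using this

lemma pwl_affine_beyond (a : ℝ) {δ : ℝ} (hδ : 0 < δ) (N : ℕ) {x : ℝ}
    (hx : a + N * δ ≤ x) :
    pwl g a δ N x = pwl g a δ N (a + N * δ) + subg g (a + N * δ) * (x - (a + N * δ)) := by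
  have hterm : ∀ y : ℝ, a + N * δ ≤ y → ∀ j ∈ Finset.range N,
      (subg g (a + (j + 1 : ℕ) * δ) - subg g (a + (j : ℕ) * δ))
        * max (y - (a + (j + 1 : ℕ) * δ)) 0
      = (subg g (a + (j + 1 : ℕ) * δ) - subg g (a + (j : ℕ) * δ)) * (y - (a + (j + 1 : ℕ) * δ)) := by
    intro y hy j hj
    have hjN : (j : ℝ) + 1 ≤ N := by
      have := Finset.mem_range.1 hj
      exact_mod_cast Nat.succ_le_of_lt this
    have : a + (j + 1 : ℕ) * δ ≤ y := by
      push_cast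
      nlinarith
    rw [max_eq_left (by linarith)]
  have expand : ∀ y : ℝ, a + N * δ ≤ y → pwl g a δ N y
      = g a + subg g a * (y - a) + ∑ j ∈ Finset.range N,
        (subg g (a + (j + 1 : ℕ) * δ) - subg g (a + (j : ℕ) * δ)) * (y - (a + (j + 1 : ℕ) * δ)) := by
    intro y hy
    rw [pwl, Finset.sum_congr rfl (hterm y hy)]
  rw [expand x hx, expand (a + N * δ) le_rfl]
  have key : ∀ y : ℝ, ∑ j ∈ Finset.range N,
      (subg g (a + (j + 1 : ℕ) * δ) - subg g (a + (j : ℕ) * δ)) * (y - (a + (j + 1 : ℕ) * δ))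
      = (∑ j ∈ Finset.range N,
        (subg g (a + (j + 1 : ℕ) * δ) - subg g (a + (j : ℕ) * δ)) * ((a + N * δ) - (a + (j + 1 : ℕ) * δ)))
        + (subg g (a + N * δ) - subg g a) * (y - (a + N * δ)) := by
    intro y
    rw [← pwl_sum_subg a δ N, Finset.sum_mul, ← Finset.sum_add_distrib]
    apply Finset.sum_congr rfl
    intro j hj
    ring
  rw [key x, key (a + N * δ)]
  ring

lemma pwl_lower (hg : Monotone g) (hc : ConvexOn ℝ univ g) (a : ℝ) {δ : ℝ} (hδ : 0 < δ) (N : ℕ) :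
    ∀ x, a ≤ x → x ≤ a + N * δ →
      g x - pwl g a δ N x ≤ δ * (subg g (a + N * δ) - subg g a) := by
  induction N with
  | zero =>
    intro x hax hxa
    simp only [Nat.cast_zero, zero_mul, add_zero] at hxa
    have hx : x = a := le_antisymm hxa hax
    subst hx
    simp [pwl]
  | succ N ih =>
    intro x hax hx1
    have htN : a + (N : ℕ) * δ < a + (N + 1 : ℕ) * δ := by push_cast; nlinarith
    have hmono : subg g (a + (N : ℕ) * δ) ≤ subg g (a + (N + 1 : ℕ) * δ) :=
      subg_mono hg hc (le_of_lt htN)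
    rcases le_total x (a + (N : ℕ) * δ) with h1 | h1
    · rw [pwl_succ, max_eq_right (by
        have := lt_of_le_of_lt h1 htN
        linarith : x - (a + (N + 1 : ℕ) * δ) ≤ 0), mul_zero, add_zero]
      have := ih x hax h1
      have hmono2 : subg g a ≤ subg g (a + (N:ℕ) * δ) :=
        subg_mono hg hc (by nlinarith [Nat.cast_nonneg (α := ℝ) N])
      nlinarith
    · -- a + N δ ≤ x ≤ a + (N+1) δ
      have haN : a ≤ a + (N : ℕ) * δ := by nlinarith [Nat.cast_nonneg (α := ℝ) N]
      have hIH := ih (a + (N : ℕ) * δ) haN le_rfl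
      rcases eq_or_lt_of_le h1 with heq | hlt
      · rw [pwl_succ, max_eq_right (by
          have := htN
          linarith [heq ▸ htN] : x - (a + (N + 1 : ℕ) * δ) ≤ 0), mul_zero, add_zero, ← heq]
        nlinarith
      · have hmax : max (x - (a + (N + 1 : ℕ) * δ)) 0 = 0 :=
          max_eq_right (by linarith)
        have haff : pwl g a δ N x = pwl g a δ N (a + (N : ℕ) * δ)
            + subg g (a + (N : ℕ) * δ) * (x - (a + (N : ℕ) * δ)) :=
          pwl_affine_beyond a hδ N h1
        have hchord : g x ≤ g (a + (N : ℕ) * δ)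
            + subg g (a + (N + 1 : ℕ) * δ) * (x - (a + (N : ℕ) * δ)) :=
          chord_bound hg hc hlt hx1
        have hdlt : x - (a + (N : ℕ) * δ) ≤ δ := by
          have : ((N:ℝ) + 1) * δ = (N:ℝ) * δ + δ := by ring
          push_cast at hx1
          linarith
        rw [pwl_succ, hmax, mul_zero, add_zero, haff]
        nlinarith [sub_nonneg.2 h1]

end Pwl
section PwlInt

variable {g : ℝ → ℝ}

lemma pwl_left (a : ℝ) {δ : ℝ} (hδ : 0 < δ) (N : ℕ) {x : ℝ} (hx : x ≤ a) :
    pwl g a δ N x = g a + subg g a * (x - a) := by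
  rw [pwl]
  have : ∀ j ∈ Finset.range N,
      (subg g (a + (j + 1 : ℕ) * δ) - subg g (a + (j : ℕ) * δ))
        * max (x - (a + (j + 1 : ℕ) * δ)) 0 = 0 := by
    intro j hj
    have h1 : (0:ℝ) < (j + 1 : ℕ) * δ := by
      have : (0:ℝ) < (j:ℝ) + 1 := by positivity
      push_cast
      nlinarith
    rw [max_eq_right (by push_cast at h1 ⊢; nlinarith), mul_zero]
  rw [Finset.sum_congr rfl this]
  simp

lemma integrable_pwl (ν : Measure ℝ) [IsProbabilityMeasure ν] (hint : Integrable id ν)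
    (a δ : ℝ) (N : ℕ) : Integrable (pwl g a δ N) ν := by
  have hbase : Integrable (fun x => g a + subg g a * (x - a)) ν := by
    apply (integrable_const (g a)).add
    exact ((hint.sub (integrable_const a)).const_mul _)
  have hsum : Integrable (fun x => ∑ j ∈ Finset.range N,
      (subg g (a + (j + 1 : ℕ) * δ) - subg g (a + (j : ℕ) * δ))
        * max (x - (a + (j + 1 : ℕ) * δ)) 0) ν := by
    apply integrable_finset_sum
    intro j hj
    exact ((hint.sub (integrable_const _)).pos_part).const_mul _
  have : pwl g a δ N = fun x => (g a + subg g a * (x - a)) + ∑ j ∈ Finset.range N,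
      (subg g (a + (j + 1 : ℕ) * δ) - subg g (a + (j : ℕ) * δ))
        * max (x - (a + (j + 1 : ℕ) * δ)) 0 := by
    funext x
    rw [pwl]
  rw [this]
  exact hbase.add hsum

lemma integral_pwl (ν : Measure ℝ) [IsProbabilityMeasure ν] (hint : Integrable id ν)
    (a δ : ℝ) (N : ℕ) :
    ∫ x, pwl g a δ N x ∂ν = (g a + subg g a * ((∫ x, x ∂ν) - a)) + ∑ j ∈ Finset.range N,
      (subg g (a + (j + 1 : ℕ) * δ) - subg g (a + (j : ℕ) * δ))
        * callFn ν (a + (j + 1 : ℕ) * δ) := by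
  have hbase : Integrable (fun x => g a + subg g a * (x - a)) ν :=
    (integrable_const (g a)).add ((hint.sub (integrable_const a)).const_mul _)
  have hterm : ∀ j : ℕ, Integrable
      (fun x => (subg g (a + (j + 1 : ℕ) * δ) - subg g (a + (j : ℕ) * δ))
        * max (x - (a + (j + 1 : ℕ) * δ)) 0) ν :=
    fun j => ((hint.sub (integrable_const _)).pos_part).const_mul _
  have hsum : Integrable (fun x => ∑ j ∈ Finset.range N,
      (subg g (a + (j + 1 : ℕ) * δ) - subg g (a + (j : ℕ) * δ))
        * max (x - (a + (j + 1 : ℕ) * δ)) 0) ν :=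
    integrable_finset_sum _ fun j _ => hterm j
  have hrw : pwl g a δ N = fun x => (g a + subg g a * (x - a)) + ∑ j ∈ Finset.range N,
      (subg g (a + (j + 1 : ℕ) * δ) - subg g (a + (j : ℕ) * δ))
        * max (x - (a + (j + 1 : ℕ) * δ)) 0 := by
    funext x; rw [pwl]
  rw [hrw, integral_add hbase hsum, integral_finset_sum _ fun j _ => hterm j]
  congr 1
  · have hid : Integrable (fun x : ℝ => x) ν := hint
    have h1 : Integrable (fun x : ℝ => subg g a * (x - a)) ν := by
      simpa using (hint.sub (integrable_const a)).const_mul (subg g a)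
    rw [integral_add (integrable_const (g a)) h1, integral_const, integral_const_mul,
      integral_sub hid (integrable_const a), integral_const]
    simp [measure_univ]
  · apply Finset.sum_congr rfl
    intro j hj
    rw [integral_const_mul]
    rfl

lemma integral_pwl_mono (μ ρ : Measure ℝ) [IsProbabilityMeasure μ] [IsProbabilityMeasure ρ]
    (hμ : Integrable id μ) (hρ : Integrable id ρ)
    (hg : Monotone g) (hc : ConvexOn ℝ univ g)
    (hcall : ∀ K, callFn μ K ≤ callFn ρ K) (hmean : (∫ x, x ∂μ) ≤ ∫ x, x ∂ρ)
    (a : ℝ) {δ : ℝ} (hδ : 0 < δ) (N : ℕ) :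
    ∫ x, pwl g a δ N x ∂μ ≤ ∫ x, pwl g a δ N x ∂ρ := by
  rw [integral_pwl μ hμ, integral_pwl ρ hρ]
  apply add_le_add
  · apply add_le_add le_rfl
    exact mul_le_mul_of_nonneg_left (by linarith) (subg_nonneg hg a)
  · apply Finset.sum_le_sum
    intro j hj
    apply mul_le_mul_of_nonneg_left (hcall _)
    have : a + (j:ℕ) * δ ≤ a + (j + 1 : ℕ) * δ := by push_cast; nlinarith
    exact sub_nonneg.2 (subg_mono hg hc this)

end PwlInt
section Main

lemma icx_of_call (μ ρ : Measure ℝ) [IsProbabilityMeasure μ] [IsProbabilityMeasure ρ]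
    (hμ : Integrable id μ) (hρ : Integrable id ρ)
    (hcall : ∀ K, callFn μ K ≤ callFn ρ K)
    (g : ℝ → ℝ) (hg : Monotone g) (hc : ConvexOn ℝ univ g)
    (hgμ : Integrable g μ) (hgρ : Integrable g ρ) :
    ∫ s, g s ∂μ ≤ ∫ s, g s ∂ρ := by
  have hmean : (∫ x, x ∂μ) ≤ ∫ x, x ∂ρ := by
    have h1 := limit_one μ ρ hμ hρ
      (avar_dom_integral_dom μ ρ hμ hρ (call_imp_avar μ ρ hμ hρ hcall))
    rw [integral_tailQ_eq_mean μ, integral_tailQ_eq_mean ρ] at h1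
    exact h1
  apply le_of_forall_pos_le_add
  intro ε hε
  -- dominating function for tails
  set M := subg g 0 with hM
  have hM0 : 0 ≤ M := subg_nonneg hg 0
  set H : ℝ → ℝ := fun x => M * |x| + |g x| + (|g 0| + 1) with hH
  have hHint : Integrable H μ := ((hμ.abs.const_mul M).add hgμ.abs).add (integrable_const _)
  have hHnn : ∀ x, 0 ≤ H x := fun x => by positivity
  set A : ℕ → Set ℝ := fun n => {x : ℝ | (n : ℝ) ≤ |x|} with hA
  have hAm : ∀ n, MeasurableSet (A n) :=
    fun n => (isClosed_le continuous_const continuous_abs).measurableSet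
  have hAanti : Antitone A := by
    intro m n hmn x hx
    simp only [hA, mem_setOf_eq] at hx ⊢
    exact le_trans (by exact_mod_cast Nat.cast_le.2 hmn) hx
  have hAinter : (⋂ n, A n) = ∅ := by
    ext x
    simp only [mem_iInter, mem_empty_iff_false, iff_false, not_forall, hA, mem_setOf_eq]
    obtain ⟨n, hn⟩ := exists_nat_gt |x|
    exact ⟨n, by push_neg; exact hn⟩
  have htend : Tendsto (fun n => ∫ x in A n, H x ∂μ) atTop (𝓝 0) := by
    have h := tendsto_setIntegral_of_antitone hAm hAanti ⟨0, hHint.integrableOn⟩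
    rw [hAinter] at h
    simpa using h
  have hev : ∀ᶠ n : ℕ in atTop, (∫ x in A n, H x ∂μ) < ε / 2 :=
    htend.eventually (gt_mem_nhds (by positivity))
  obtain ⟨n, hn_tail, hn1⟩ := (hev.and (eventually_ge_atTop 1)).exists
  -- set up grid
  set a : ℝ := -(n : ℝ) with ha
  set S := subg g ((n : ℝ) + 1) with hS
  have hS0 : 0 ≤ S := subg_nonneg hg _
  set δ : ℝ := min 1 ((ε / 2) / (S + 1)) with hδdef
  have hδ : 0 < δ := lt_min one_pos (by positivity)
  have hδ1 : δ ≤ 1 := min_le_left _ _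
  have hn0 : (1:ℝ) ≤ (n:ℝ) := by exact_mod_cast hn1
  obtain ⟨N, hNge, hNlt⟩ : ∃ N : ℕ, 2 * (n:ℝ) ≤ (N:ℝ) * δ ∧ (N:ℝ) * δ < 2 * (n:ℝ) + δ := by
    refine ⟨⌈2 * (n : ℝ) / δ⌉₊, ?_, ?_⟩
    · have h1 : 2 * (n:ℝ) / δ ≤ ((⌈2 * (n : ℝ) / δ⌉₊ : ℕ) : ℝ) := Nat.le_ceil _
      rw [div_le_iff₀ hδ] at h1
      linarith
    · have h1 : ((⌈2 * (n : ℝ) / δ⌉₊ : ℕ) : ℝ) < 2 * (n:ℝ) / δ + 1 := by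
        apply Nat.ceil_lt_add_one
        positivity
      have h2 := mul_lt_mul_of_pos_right h1 hδ
      rw [add_mul, div_mul_cancel₀ _ (ne_of_gt hδ), one_mul] at h2
      exact h2
  set tN : ℝ := a + N * δ with htN
  have htNn : (n : ℝ) ≤ tN := by
    rw [htN, ha]
    linarith
  have htN1 : tN ≤ (n : ℝ) + 1 := by
    rw [htN, ha]
    linarith
  have hatN : a ≤ tN := by rw [ha]; linarith
  have ha0 : a ≤ 0 := by rw [ha]; linarith
  set E : ℝ := δ * (subg g tN - subg g a) with hE
  have hE0 : 0 ≤ E := mul_nonneg hδ.le (sub_nonneg.2 (subg_mono hg hc hatN))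
  have hEε : E ≤ ε / 2 := by
    have h1 : subg g tN ≤ S := subg_mono hg hc htN1
    have h2 : 0 ≤ subg g a := subg_nonneg hg a
    have h3 : δ ≤ (ε / 2) / (S + 1) := min_le_right _ _
    have h4 : subg g tN - subg g a ≤ S + 1 := by linarith
    calc E ≤ δ * (S + 1) := by
          apply mul_le_mul_of_nonneg_left h4 hδ.le
      _ ≤ ((ε / 2) / (S + 1)) * (S + 1) := by
          apply mul_le_mul_of_nonneg_right h3 (by linarith)
      _ = ε / 2 := div_mul_cancel₀ _ (by positivity)
  -- pointwise bound
  have hpt : ∀ x, g x - pwl g a δ N x ≤ E + (A n).indicator H x := by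
    intro x
    rcases le_or_gt x a with hxa | hax
    · have hleft := pwl_left (g := g) a hδ N hxa
      have hxA : x ∈ A n := by
        simp only [hA, mem_setOf_eq, ha] at hxa ⊢
        rw [abs_of_nonpos (by linarith)]
        linarith
      rw [indicator_of_mem hxA]
      have h1 : g x ≤ g a := hg hxa
      have h2 : subg g a ≤ M := subg_mono hg hc ha0
      have h3 : 0 ≤ subg g a := subg_nonneg hg a
      have habs : |x| = -x := abs_of_nonpos (by linarith)
      have hHx : M * (-x) ≤ H x := by
        show M * (-x) ≤ M * |x| + |g x| + (|g 0| + 1)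
        rw [habs]
        linarith [abs_nonneg (g x), abs_nonneg (g 0)]
      rw [hleft]
      have key : g x - (g a + subg g a * (x - a)) ≤ M * (-x) := by
        have hax' : 0 ≤ a - x := by linarith
        nlinarith
      linarith
    · rcases le_or_gt x tN with hxt | htx
      · have h1 := pwl_lower hg hc a hδ N x hax.le hxt
        have h2 : 0 ≤ (A n).indicator H x := indicator_nonneg (fun y _ => hHnn y) x
        rw [← htN, ← hE] at h1
        linarith
      · have haff := pwl_affine_beyond (g := g) a hδ N (le_of_lt htx)
        have hlow := pwl_lower hg hc a hδ N tN hatN (by rw [htN])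
        rw [← htN] at haff
        rw [← hE] at hlow
        have hs : 0 ≤ subg g tN := subg_nonneg hg tN
        have hxA : x ∈ A n := by
          simp only [hA, mem_setOf_eq]
          rw [abs_of_nonneg (by linarith : (0:ℝ) ≤ x)]
          linarith
        rw [indicator_of_mem hxA]
        have hgx : g tN ≥ g 0 := hg (by linarith)
        have hH1 : |g x| + |g 0| ≤ H x := by
          show |g x| + |g 0| ≤ M * |x| + |g x| + (|g 0| + 1)
          linarith [mul_nonneg hM0 (abs_nonneg x)]
        have habs1 : g x ≤ |g x| := le_abs_self _
        have habs2 : -|g 0| ≤ g 0 := neg_abs_le _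
        have hterm : 0 ≤ subg g tN * (x - tN) := mul_nonneg hs (by linarith)
        rw [haff]
        linarith
  -- integrate
  have hpwlμ : Integrable (pwl g a δ N) μ := integrable_pwl μ hμ a δ N
  have hpwlρ : Integrable (pwl g a δ N) ρ := integrable_pwl ρ hρ a δ N
  have hbound : Integrable (fun x => E + (A n).indicator H x) μ :=
    (integrable_const E).add (hHint.indicator (hAm n))
  have hint1 : (∫ x, g x ∂μ) - ∫ x, pwl g a δ N x ∂μ ≤ E + ∫ x in A n, H x ∂μ := by
    have h1 : ∫ x, (g x - pwl g a δ N x) ∂μ ≤ ∫ x, (E + (A n).indicator H x) ∂μ :=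
      integral_mono (hgμ.sub hpwlμ) hbound hpt
    rw [integral_sub hgμ hpwlμ] at h1
    rw [integral_add (integrable_const E) (hHint.indicator (hAm n)), integral_const,
      integral_indicator (hAm n)] at h1
    simpa [measure_univ] using h1
  have h2 : ∫ x, pwl g a δ N x ∂μ ≤ ∫ x, pwl g a δ N x ∂ρ :=
    integral_pwl_mono μ ρ hμ hρ hg hc hcall hmean a hδ N
  have h3 : ∫ x, pwl g a δ N x ∂ρ ≤ ∫ x, g x ∂ρ :=
    integral_mono hpwlρ hgρ (pwl_le_self hg hc a hδ N)
  have h4 : (∫ x in A n, H x ∂μ) < ε / 2 := hn_tail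
  calc ∫ s, g s ∂μ ≤ (∫ x, pwl g a δ N x ∂μ) + (E + ∫ x in A n, H x ∂μ) := by linarith
    _ ≤ (∫ x, g x ∂ρ) + (ε / 2 + ε / 2) := by linarith
    _ = (∫ s, g s ∂ρ) + ε := by ring

end Main
lemma call_of_icx (μ ρ : Measure ℝ) [IsProbabilityMeasure μ] [IsProbabilityMeasure ρ]
    (hμ : Integrable id μ) (hρ : Integrable id ρ)
    (hicx : ∀ g : ℝ → ℝ, Monotone g → ConvexOn ℝ univ g → Integrable g μ → Integrable g ρ →
      ∫ s, g s ∂μ ≤ ∫ s, g s ∂ρ) :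
    ∀ K, callFn μ K ≤ callFn ρ K := by
  intro K
  have hmono : Monotone (fun s : ℝ => max (s - K) 0) :=
    fun x y hxy => max_le_max (by linarith) le_rfl
  have hconv : ConvexOn ℝ univ (fun s : ℝ => max (s - K) 0) := by
    refine ⟨convex_univ, fun x _ y _ p q hp hq hpq => ?_⟩
    simp only [smul_eq_mul]
    apply max_le
    · have h1 : p * (x - K) ≤ p * max (x - K) 0 :=
        mul_le_mul_of_nonneg_left (le_max_left _ _) hp
      have h2 : q * (y - K) ≤ q * max (y - K) 0 :=
        mul_le_mul_of_nonneg_left (le_max_left _ _) hq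
      have heq : p * x + q * y - K = p * (x - K) + q * (y - K) := by
        have : p * x + q * y - K - (p * (x - K) + q * (y - K)) = K * ((p + q) - 1) := by ring
        rw [hpq] at this
        linarith [this]
      linarith
    · have h1 : (0:ℝ) ≤ p * max (x - K) 0 :=
        mul_nonneg hp (le_max_right _ _)
      have h2 : (0:ℝ) ≤ q * max (y - K) 0 :=
        mul_nonneg hq (le_max_right _ _)
      linarith
  have hintμ : Integrable (fun s => max (s - K) 0) μ := by
    simpa using (hμ.sub (integrable_const K)).pos_part
  have hintρ : Integrable (fun s => max (s - K) 0) ρ := by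
    simpa using (hρ.sub (integrable_const K)).pos_part
  exact hicx _ hmono hconv hintμ hintρ

theorem stmt_9 (μ ρ : Measure ℝ) [IsProbabilityMeasure μ] [IsProbabilityMeasure ρ]
    (hμ : Integrable id μ) (hρ : Integrable id ρ) :
    ((∀ l ∈ Ioo (0 : ℝ) 1, avar μ l ≤ avar ρ l) ↔ ∀ K : ℝ, callFn μ K ≤ callFn ρ K) ∧
    ((∀ y : ℝ, hlTransform μ (Ici y) ≤ hlTransform ρ (Ici y)) ↔
      ∀ g : ℝ → ℝ, Monotone g → ConvexOn ℝ univ g → Integrable g μ → Integrable g ρ →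
        ∫ s, g s ∂μ ≤ ∫ s, g s ∂ρ) := by
  constructor
  · exact ⟨avar_imp_call μ ρ hμ hρ, call_imp_avar μ ρ hμ hρ⟩
  · constructor
    · intro hhl g hg hc hgμ hgρ
      exact icx_of_call μ ρ hμ hρ
        (avar_imp_call μ ρ hμ hρ (avar_dom_of_hl_dom μ ρ hμ hρ hhl)) g hg hc hgμ hgρ
    · intro hicx
      exact hl_dom_of_avar_dom μ ρ hμ hρ
        (call_imp_avar μ ρ hμ hρ (call_of_icx μ ρ hμ hρ hicx))
end
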